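/- arXiv:1608.00658 — 2 statements merged into one kernel-verified Lean document; each statement's English description precedes it below -/
import Mathlib

section
/- Let n be a finite nonempty index type, Q an n×n real matrix, q a positive real number, and P = I + q⁻¹ • Q (where I is the identity matrix). Then for every real t, the matrix exponential satisfies exp(t • Q) = e^{-q·t} • ∑_{k=0}^{∞} ((q·t)^k / k!) • P^k, where the series on the right converges (it equals e^{-q·t} · exp(q·t · P)). (This is the uniformisation identity underlying the transient analysis of continuous-time Markov chains.) -/
open NormedSpace

/-- Uniformisation identity: for a CTMC generator `Q`, uniformisation rate `q > 0` and
uniformised matrix `P = I + q⁻¹ • Q`, we have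
`exp (t • Q) = e^{-q t} • ∑ₖ ((q t)^k / k!) • P^k`, where the series converges
(indeed it equals `exp ((q t) • P)`, so that `exp (t • Q) = e^{-q t} • exp ((q t) • P)`). -/
theorem uniformisation_identity {n : Type*} [Fintype n] [Nonempty n] [DecidableEq n]
    (Q : Matrix n n ℝ) (q : ℝ) (hq : 0 < q)
    (P : Matrix n n ℝ) (hP : P = 1 + q⁻¹ • Q) (t : ℝ) :
    Summable (fun k : ℕ => ((q * t) ^ k / (k.factorial : ℝ)) • P ^ k) ∧
    exp (t • Q) =
      Real.exp (-(q * t)) • ∑' k : ℕ, ((q * t) ^ k / (k.factorial : ℝ)) • P ^ k ∧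
    (∑' k : ℕ, ((q * t) ^ k / (k.factorial : ℝ)) • P ^ k) = exp ((q * t) • P) ∧
    exp (t • Q) = Real.exp (-(q * t)) • exp ((q * t) • P) := by
  letI : SeminormedRing (Matrix n n ℝ) := Matrix.linftyOpSemiNormedRing
  letI : NormedRing (Matrix n n ℝ) := Matrix.linftyOpNormedRing
  letI : NormedAlgebra ℝ (Matrix n n ℝ) := Matrix.linftyOpNormedAlgebra
  haveI : CompleteSpace (Matrix n n ℝ) := FiniteDimensional.complete ℝ _
  have key : ∀ k : ℕ, ((q * t) ^ k / (k.factorial : ℝ)) • P ^ k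
      = ((k.factorial : ℝ)⁻¹) • ((q * t) • P) ^ k := by
    intro k
    rw [smul_pow, smul_smul, div_eq_inv_mul]
  have hsum : Summable (fun k : ℕ => ((q * t) ^ k / (k.factorial : ℝ)) • P ^ k) := by
    simp_rw [key]
    exact expSeries_summable' ((q * t) • P)
  have htsum : (∑' k : ℕ, ((q * t) ^ k / (k.factorial : ℝ)) • P ^ k) = exp ((q * t) • P) := by
    simp_rw [key]
    rw [exp_eq_tsum (𝕂 := ℝ)]
  have hdecomp : t • Q = (-(q * t)) • (1 : Matrix n n ℝ) + (q * t) • P := by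
    rw [hP, smul_add, smul_smul, mul_comm q t, mul_assoc, mul_inv_cancel₀ hq.ne', mul_one]
    module
  have hexp1 : exp ((-(q * t)) • (1 : Matrix n n ℝ)) = Real.exp (-(q * t)) • 1 := by
    rw [← Algebra.algebraMap_eq_smul_one]
    erw [← algebraMap_exp_comm]
    rw [show NormedSpace.exp (-(q * t)) = Real.exp (-(q * t)) from (congrFun Real.exp_eq_exp_ℝ _).symm,
      Algebra.algebraMap_eq_smul_one]
  have hmain : exp (t • Q) = Real.exp (-(q * t)) • exp ((q * t) • P) := by
    rw [hdecomp, Matrix.exp_add_of_commute _ _ ((Commute.one_left _).smul_left _), hexp1,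
      smul_mul_assoc, one_mul]
  exact ⟨hsum, by rw [htsum, hmain], htsum, hmain⟩
end

section
/- Let n be a finite nonempty index type and Q an n×n real matrix with nonnegative off-diagonal entries, i.e. Q i j ≥ 0 whenever i ≠ j. Then for every real t ≥ 0, all entries of exp(t • Q) are nonnegative: (exp(t • Q)) i j ≥ 0 for all i, j. (Transient probabilities of a CTMC are nonnegative; this follows from the uniformisation representation, choosing the uniformisation rate q at least as large as every diagonal magnitude so that P = I + q⁻¹Q is entrywise nonnegative.) -/
open NormedSpace

lemma exp_entries_nonneg_aux {n : Type*} [Fintype n] [DecidableEq n]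
    (B : Matrix n n ℝ) (hB : ∀ i j, 0 ≤ B i j) (i j : n) : 0 ≤ (exp B) i j := by
  letI : SeminormedRing (Matrix n n ℝ) := Matrix.linftyOpSemiNormedRing
  letI : NormedRing (Matrix n n ℝ) := Matrix.linftyOpNormedRing
  letI : NormedAlgebra ℝ (Matrix n n ℝ) := Matrix.linftyOpNormedAlgebra
  have hs := NormedSpace.exp_series_hasSum_exp' (𝕂 := ℝ) B
  have hpow : ∀ k, ∀ a b, 0 ≤ (B ^ k) a b := by
    intro k
    induction k with
    | zero => intro a b; simp [Matrix.one_apply]; positivity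
    | succ m ih =>
      intro a b
      rw [pow_succ, Matrix.mul_apply]
      exact Finset.sum_nonneg fun c _ => mul_nonneg (ih a c) (hB c b)
  have hcont : Continuous fun M : Matrix n n ℝ => M i j := by
    exact (continuous_apply j).comp (continuous_apply i)
  have hs2 : HasSum (fun k => (((Nat.factorial k : ℝ)⁻¹) • B ^ k) i j) ((exp B) i j) := by
    have := hs.map (⟨⟨⟨fun M => M i j, fun _ _ => rfl⟩, fun _ _ => rfl⟩, hcont⟩ :
      Matrix n n ℝ →L[ℝ] ℝ) (by exact hcont)
    exact this
  refine hs2.nonneg fun k => ?_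
  simp only [Matrix.smul_apply, smul_eq_mul]
  exact mul_nonneg (by positivity) (hpow k i j)

lemma exp_smul_one_eq {n : Type*} [Fintype n] [DecidableEq n] (r : ℝ) :
    exp (r • (1 : Matrix n n ℝ)) = Real.exp r • (1 : Matrix n n ℝ) := by
  letI : SeminormedRing (Matrix n n ℝ) := Matrix.linftyOpSemiNormedRing
  letI : NormedRing (Matrix n n ℝ) := Matrix.linftyOpNormedRing
  letI : NormedAlgebra ℝ (Matrix n n ℝ) := Matrix.linftyOpNormedAlgebra
  have h := NormedSpace.algebraMap_exp_comm (𝔸 := Matrix n n ℝ) r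
  rw [← Real.exp_eq_exp_ℝ, Algebra.algebraMap_eq_smul_one, Algebra.algebraMap_eq_smul_one] at h
  exact h.symm

/-- If the off-diagonal entries of `Q` are nonnegative, then for every `t ≥ 0` all the
entries of `exp (t • Q)` are nonnegative. -/
theorem exp_entries_nonneg {n : Type*} [Fintype n] [Nonempty n] [DecidableEq n]
    (Q : Matrix n n ℝ) (hQ : ∀ i j, i ≠ j → 0 ≤ Q i j) (t : ℝ) (ht : 0 ≤ t) :
    ∀ i j, 0 ≤ (NormedSpace.exp (t • Q)) i j := by
  set c : ℝ := ∑ k, |Q k k| with hc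
  have hcle : ∀ i, -Q i i ≤ c := by
    intro i
    refine le_trans (neg_le_abs _) ?_
    exact Finset.single_le_sum (f := fun k => |Q k k|) (fun k _ => abs_nonneg _)
      (Finset.mem_univ i)
  have hA : ∀ i j, 0 ≤ (t • (Q + c • (1 : Matrix n n ℝ))) i j := by
    intro i j
    simp only [Matrix.smul_apply, Matrix.add_apply, Matrix.one_apply, smul_eq_mul]
    rcases eq_or_ne i j with rfl | hij
    · rw [if_pos rfl, mul_one]
      have h1 := hcle i
      have h2 : 0 ≤ Q i i + c := by linarith
      exact mul_nonneg ht h2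
    · rw [if_neg hij, mul_zero, add_zero]
      exact mul_nonneg ht (hQ i j hij)
  have key : t • Q = t • (Q + c • (1 : Matrix n n ℝ)) + (-(t * c)) • (1 : Matrix n n ℝ) := by
    module
  have hcomm : Commute (t • (Q + c • (1 : Matrix n n ℝ))) ((-(t * c)) • (1 : Matrix n n ℝ)) :=
    (Commute.one_right _).smul_right _
  intro i j
  rw [key]
  rw [Matrix.exp_add_of_commute _ _ hcomm]
  rw [exp_smul_one_eq]
  rw [Matrix.mul_apply]
  refine Finset.sum_nonneg fun k _ => mul_nonneg (exp_entries_nonneg_aux _ hA i k) ?_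
  simp only [Matrix.smul_apply, Matrix.one_apply, smul_eq_mul]
  positivity
end
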